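/- For a monotone derivative computation: for x_0 in the cylinder of rank m with base c_1...c_m, the increment of f over the cylinder equals μ_f = Σ_{k≥1}(q_{m+k}−1)/q^{m+k}, while the cylinder length is 1/(q_1⋯q_m); hence the ratio μ_f/|Δ| equals (q_1⋯q_m/q^m)·Σ_{n≥m+1}(q_n−1)/q^{n−m}, and this ratio lies between (1/(q−1))·(q_1⋯q_m/q^m) and q_1⋯q_m/q^m. -/

import Mathlib

/-- The nega-q value `Σ_{k≥1} ε_k/(−q)^k` of a digit sequence. -/
noncomputable def negVal (q0 : ℕ) (e : ℕ → ℕ) : ℝ :=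
  ∑' k : ℕ, (e k : ℝ) / (-(q0 : ℝ)) ^ (k + 1)

private lemma bound_aux {Q a : ℝ} (hQ : 0 < Q) (ha : 0 ≤ a) (haQ : a ≤ Q) (n : ℕ) :
    a / Q ^ (n + 1) ≤ (1 / Q) ^ n := by
  have hp : (0:ℝ) < Q ^ n := pow_pos hQ n
  rw [div_pow, one_pow, pow_succ, div_le_div_iff₀ (by positivity) hp]
  nlinarith [mul_le_mul_of_nonneg_right haQ hp.le]

private lemma geom_aux {Q : ℝ} (hQ : 2 ≤ Q) :
    ∑' k : ℕ, (1 / Q) ^ (k + 1) = 1 / (Q - 1) := by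
  have h0 : (0:ℝ) < Q := by linarith
  have hlt : (1 / Q) < 1 := by rw [div_lt_one h0]; linarith
  have hge : (0:ℝ) ≤ 1 / Q := by positivity
  calc ∑' k : ℕ, (1 / Q) ^ (k + 1) = ∑' k : ℕ, (1 / Q) * (1 / Q) ^ k := by
        apply tsum_congr; intro k; rw [pow_succ]; ring
    _ = (1 / Q) * (1 - 1 / Q)⁻¹ := by
        rw [tsum_mul_left, tsum_geometric_of_lt_one hge hlt]
    _ = 1 / (Q - 1) := by
        have h1 : 1 - 1 / Q = (Q - 1) / Q := by field_simp
        have hQne : Q ≠ 0 := by linarith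
        have hne : Q - 1 ≠ 0 := by linarith
        rw [h1, inv_div, div_mul_div_comm, one_mul, div_eq_div_iff (by positivity) hne]
        ring

/-- for the cylinder of rank `m` with base `c_1 … c_m`, the increment
`μ_f = f(sup Δ) − f(inf Δ)` equals `Σ_{k≥1} (q_{m+k} − 1)/q^{m+k}`, the cylinder length is
`1/(q_1⋯q_m)`, hence `μ_f/|Δ| = (q_1⋯q_m/q^m)·Σ_{n≥m+1} (q_n − 1)/q^{n−m}`, which lies
between `(1/(q−1))·(q_1⋯q_m/q^m)` and `q_1⋯q_m/q^m`.  The endpoints of the cylinder are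
the points with tails `(q_{m+1}−1) 0 (q_{m+3}−1) 0 …` and `0 (q_{m+2}−1) 0 (q_{m+4}−1) …`,
with sup/inf depending on the parity of `m`. -/
theorem stmt16 (q0 : ℕ) (q : ℕ → ℕ) (hq2 : ∀ k, 2 ≤ q k) (hqq : ∀ k, q k ≤ q0)
    (m : ℕ) (c : ℕ → ℕ) (hc : ∀ k, c k < q k) :
    let eA : ℕ → ℕ := fun n => if n < m then c n else if (n - m) % 2 = 0 then q n - 1 else 0
    let eB : ℕ → ℕ := fun n => if n < m then c n else if (n - m) % 2 = 0 then 0 else q n - 1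
    let μ : ℝ := if m % 2 = 0 then negVal q0 eB - negVal q0 eA else negVal q0 eA - negVal q0 eB
    let len : ℝ := 1 / ∏ i ∈ Finset.range m, (q i : ℝ)
    let P : ℝ := (∏ i ∈ Finset.range m, (q i : ℝ)) / (q0 : ℝ) ^ m
    μ = (∑' k : ℕ, ((q (m + k) : ℝ) - 1) / (q0 : ℝ) ^ (m + k + 1)) ∧
      μ / len = P * ∑' k : ℕ, ((q (m + k) : ℝ) - 1) / (q0 : ℝ) ^ (k + 1) ∧
      (1 / ((q0 : ℝ) - 1)) * P ≤ μ / len ∧ μ / len ≤ P := by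
  intro eA eB μ len P
  have hq0 : 2 ≤ q0 := le_trans (hq2 0) (hqq 0)
  set Q : ℝ := (q0 : ℝ) with hQdef
  have hQ2 : (2:ℝ) ≤ Q := by rw [hQdef]; exact_mod_cast hq0
  have hQ0 : (0:ℝ) < Q := by linarith
  have hgeom : Summable (fun n : ℕ => (1 / Q) ^ n) :=
    summable_geometric_of_lt_one (by positivity) (by rw [div_lt_one hQ0]; linarith)
  -- summability of digit series
  have hsum : ∀ e : ℕ → ℕ, (∀ n, e n ≤ q0) →
      Summable (fun n => (e n : ℝ) / (-Q) ^ (n + 1)) := by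
    intro e he
    apply Summable.of_norm_bounded hgeom
    intro n
    have h1 : ‖(e n : ℝ) / (-Q) ^ (n + 1)‖ = (e n : ℝ) / Q ^ (n + 1) := by
      rw [norm_div, norm_pow, norm_neg]
      simp [abs_of_nonneg hQ0.le]
    rw [h1]
    exact bound_aux hQ0 (Nat.cast_nonneg _) (by rw [hQdef]; exact_mod_cast he n) n
  have heA : ∀ n, eA n ≤ q0 := by
    intro n
    have h1 := hc n; have h2 := hqq n; have h3 := hq2 n
    simp only [eA]; split_ifs <;> omega
  have heB : ∀ n, eB n ≤ q0 := by
    intro n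
    have h1 := hc n; have h2 := hqq n; have h3 := hq2 n
    simp only [eB]; split_ifs <;> omega
  have hA := hsum eA heA
  have hB := hsum eB heB
  set g : ℕ → ℝ := fun n => if n < m then 0 else ((q n : ℝ) - 1) / Q ^ (n + 1) with hgdef
  have hcast : ∀ n, ((q n - 1 : ℕ) : ℝ) = (q n : ℝ) - 1 := by
    intro n
    rw [Nat.cast_sub (by linarith [hq2 n] : 1 ≤ q n)]
    simp
  -- the key pointwise identities
  have hkeyB : ∀ n, m % 2 = 0 →
      (eB n : ℝ) / (-Q) ^ (n + 1) - (eA n : ℝ) / (-Q) ^ (n + 1) = g n := by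
    intro n hm
    by_cases hn : n < m
    · simp [eA, eB, g, hn]
    · push_neg at hn
      by_cases hj : (n - m) % 2 = 0
      · have hpow : (-Q) ^ (n + 1) = -(Q ^ (n + 1)) :=
          Odd.neg_pow (by rw [Nat.odd_iff]; omega) Q
        simp only [eA, eB, g, if_neg (not_lt.mpr hn), if_pos hj, hpow, hcast n]
        rw [div_neg]
        ring
      · have hpow : (-Q) ^ (n + 1) = Q ^ (n + 1) :=
          Even.neg_pow (by rw [Nat.even_iff]; omega) Q
        simp only [eA, eB, g, if_neg (not_lt.mpr hn), if_neg hj, hpow, hcast n]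
        ring
  have hkeyA : ∀ n, m % 2 = 1 →
      (eA n : ℝ) / (-Q) ^ (n + 1) - (eB n : ℝ) / (-Q) ^ (n + 1) = g n := by
    intro n hm
    by_cases hn : n < m
    · simp [eA, eB, g, hn]
    · push_neg at hn
      by_cases hj : (n - m) % 2 = 0
      · have hpow : (-Q) ^ (n + 1) = Q ^ (n + 1) :=
          Even.neg_pow (by rw [Nat.even_iff]; omega) Q
        simp only [eA, eB, g, if_neg (not_lt.mpr hn), if_pos hj, hpow, hcast n]
        ring
      · have hpow : (-Q) ^ (n + 1) = -(Q ^ (n + 1)) :=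
          Odd.neg_pow (by rw [Nat.odd_iff]; omega) Q
        simp only [eA, eB, g, if_neg (not_lt.mpr hn), if_neg hj, hpow, hcast n]
        rw [div_neg]
        ring
  have hμg : μ = ∑' n, g n := by
    by_cases hm : m % 2 = 0
    · simp only [μ, if_pos hm, negVal]
      rw [← Summable.tsum_sub hB hA]
      exact tsum_congr fun n => hkeyB n hm
    · simp only [μ, if_neg hm, negVal]
      rw [← Summable.tsum_sub hA hB]
      exact tsum_congr fun n => hkeyA n (by omega)
  have hg : Summable g := by
    apply Summable.of_norm_bounded hgeom
    intro n
    simp only [g]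
    split_ifs with hn
    · simp
      positivity
    · have h2 : (2:ℝ) ≤ (q n : ℝ) := by exact_mod_cast hq2 n
      have hle : (q n : ℝ) ≤ Q := by rw [hQdef]; exact_mod_cast hqq n
      rw [Real.norm_eq_abs, abs_of_nonneg (div_nonneg (by linarith) (by positivity))]
      exact bound_aux hQ0 (by linarith) (by linarith) n
  -- first conjunct
  have hshift := Summable.sum_add_tsum_nat_add m hg
  have hzero : ∑ i ∈ Finset.range m, g i = 0 := by
    apply Finset.sum_eq_zero
    intro i hi
    simp [g, Finset.mem_range.mp hi]
  rw [hzero, zero_add] at hshift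
  have hfirst : μ = ∑' k : ℕ, ((q (m + k) : ℝ) - 1) / Q ^ (m + k + 1) := by
    rw [hμg, ← hshift]
    apply tsum_congr
    intro k
    simp only [g]
    rw [if_neg (by omega), add_comm k m]
  -- second conjunct
  set S : ℝ := ∑' k : ℕ, ((q (m + k) : ℝ) - 1) / Q ^ (k + 1) with hSdef
  have hprod : (0:ℝ) < ∏ i ∈ Finset.range m, (q i : ℝ) := by
    apply Finset.prod_pos
    intro i _
    have := hq2 i
    positivity
  have hμS : μ = (1 / Q ^ m) * S := by
    rw [hfirst, hSdef, ← tsum_mul_left]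
    apply tsum_congr
    intro k
    rw [show m + k + 1 = m + (k + 1) by ring, pow_add]
    have h1 : Q ^ m ≠ 0 := by positivity
    have h2 : Q ^ (k + 1) ≠ 0 := by positivity
    field_simp
  have hdiv : μ / len = P * S := by
    simp only [len, P]
    rw [div_div_eq_mul_div, div_one, hμS]
    ring
  -- bounds on S
  have hSsum : Summable (fun k : ℕ => ((q (m + k) : ℝ) - 1) / Q ^ (k + 1)) := by
    apply Summable.of_norm_bounded hgeom
    intro k
    have h2 : (2:ℝ) ≤ (q (m + k) : ℝ) := by exact_mod_cast hq2 (m + k)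
    have hle : (q (m + k) : ℝ) ≤ Q := by rw [hQdef]; exact_mod_cast hqq (m + k)
    rw [Real.norm_eq_abs, abs_of_nonneg (div_nonneg (by linarith) (by positivity))]
    exact bound_aux hQ0 (by linarith) (by linarith) k
  have hgeom' : Summable (fun k : ℕ => (1 / Q) ^ (k + 1)) := by
    apply Summable.of_norm_bounded hgeom
    intro k
    rw [Real.norm_eq_abs, abs_of_nonneg (by positivity)]
    have : (0:ℝ) ≤ 1 / Q := by positivity
    calc (1 / Q) ^ (k + 1) ≤ (1 / Q) ^ k * 1 := by
          rw [pow_succ]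
          gcongr
          rw [div_le_one hQ0]; linarith
      _ = (1 / Q) ^ k := by ring
  have hSlow : 1 / (Q - 1) ≤ S := by
    rw [← geom_aux hQ2, hSdef]
    apply Summable.tsum_le_tsum _ hgeom' hSsum
    intro k
    rw [div_pow, one_pow]
    have h2 : (2:ℝ) ≤ (q (m + k) : ℝ) := by exact_mod_cast hq2 (m + k)
    gcongr
    linarith
  have hShigh : S ≤ 1 := by
    have h1 : S ≤ ∑' k : ℕ, (Q - 1) * (1 / Q) ^ (k + 1) := by
      apply Summable.tsum_le_tsum _ hSsum (hgeom'.mul_left _)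
      intro k
      have hle : (q (m + k) : ℝ) ≤ Q := by rw [hQdef]; exact_mod_cast hqq (m + k)
      rw [div_pow, one_pow, mul_one_div]
      gcongr
    rw [tsum_mul_left, geom_aux hQ2] at h1
    have : (Q - 1) * (1 / (Q - 1)) = 1 := by
      rw [mul_one_div, div_self (by linarith : Q - 1 ≠ 0)]
    linarith
  have hP : 0 ≤ P := by
    simp only [P]
    positivity
  refine ⟨hfirst, hdiv, ?_, ?_⟩
  · rw [hdiv]
    calc 1 / (Q - 1) * P = P * (1 / (Q - 1)) := by ring
      _ ≤ P * S := by gcongr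
  · rw [hdiv]
    calc P * S ≤ P * 1 := by gcongr
      _ = P := by ring
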